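/- For x > 2 let y(x) = (x² − 4)^{−1/2}, and for sufficiently differentiable f on (2, ∞) define (Df)(x) = (4(x² − 4)/x)·f′(x) + 4·f(x) and (Ef)(x) = ((x² − 4)²/x)·f‴(x) + 8(x² − 4)·f″(x) + ((14x² − 24)/x)·f′(x) + 4·f(x). Set p₀(Y) = −Y ∈ ℝ[Y]. Then there is a unique sequence of polynomials (p_g)_{g≥1} in ℝ[Y] such that for every g ≥ 1: (a) p_g is an ℝ-linear combination of the odd monomials Y³, Y⁵, …, Y^{2g+1}, and (b) D(p_g ∘ y) = E(p_{g−1} ∘ y) as functions on (2, ∞). Moreover p₁(Y) = (1/2)·Y³. (This is the paper's statement that the genus-g one-point series W₁^g of Θ-Gromov–Witten invariants of P¹ is a polynomial of degree 2g+1 in y, determined by the recursion D W₁^g = E W₁^{g−1} from W₁⁰ = −y.) -/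

import Mathlib

open Polynomial
open scoped Classical

/-- The operator `D = (4/(x·y²))·d/dx + 4 = (4(x²−4)/x)·d/dx + 4`. -/
noncomputable def thetaDop (f : ℝ → ℝ) (x : ℝ) : ℝ :=
  (4 * (x ^ 2 - 4) / x) * deriv f x + 4 * f x

/-- The operator
`E = (1/(x·y⁴))·d³/dx³ + (8/y²)·d²/dx² + ((14x² − 24)/x)·d/dx + 4`. -/
noncomputable def thetaEop (f : ℝ → ℝ) (x : ℝ) : ℝ :=
  ((x ^ 2 - 4) ^ 2 / x) * iteratedDeriv 3 f x + 8 * (x ^ 2 - 4) * iteratedDeriv 2 f x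
    + ((14 * x ^ 2 - 24) / x) * deriv f x + 4 * f x

/-- `y(x) = (x² − 4)^{−1/2}` on `(2, ∞)`. -/
noncomputable def thetaY (x : ℝ) : ℝ := (x ^ 2 - 4) ^ (-(1 / 2 : ℝ))

/-- The predicate on a sequence `(p_g)` of real polynomials: `p₀(Y) = −Y`, each
`p_g` for `g ≥ 1` is an ℝ-linear combination of the odd monomials
`Y³, Y⁵, …, Y^{2g+1}`, and `D(p_g ∘ y) = E(p_{g−1} ∘ y)` on `(2, ∞)`. -/
def thetaOnePointSeq (p : ℕ → Polynomial ℝ) : Prop :=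
  p 0 = -Polynomial.X ∧
  ∀ g : ℕ, 1 ≤ g →
    (∃ c : ℕ → ℝ, p g = ∑ j ∈ Finset.Icc 1 g, Polynomial.C (c j) * Polynomial.X ^ (2 * j + 1)) ∧
    ∀ x : ℝ, 2 < x →
      thetaDop (fun t => (p g).eval (thetaY t)) x
        = thetaEop (fun t => (p (g - 1)).eval (thetaY t)) x

noncomputable def Dp (q : ℝ[X]) : ℝ[X] := C 4 * q - C 4 * (X * derivative q)

noncomputable def Ep (q : ℝ[X]) : ℝ[X] :=
  C 4 * q + C 4 * (derivative q * X ^ 3) - C 4 * (derivative q * X ^ 1)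
    + C 2 * (derivative (derivative q) * X ^ 2)
    - C 4 * (derivative (derivative q) * X ^ 4)
    - derivative (derivative (derivative q)) * X ^ 3
    - C 4 * (derivative (derivative (derivative q)) * X ^ 5)



lemma sub_pos' {x : ℝ} (hx : 2 < x) : 0 < x ^ 2 - 4 := by nlinarith

lemma thetaY_pos {x : ℝ} (hx : 2 < x) : 0 < thetaY x :=
  Real.rpow_pos_of_pos (sub_pos' hx) _

lemma thetaY_pow {x : ℝ} (hx : 2 < x) (n : ℕ) :
    thetaY x ^ n = (x ^ 2 - 4) ^ (-(n / 2 : ℝ)) := by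
  rw [thetaY, ← Real.rpow_natCast ((x^2-4) ^ (-(1/2:ℝ))) n, ← Real.rpow_mul (sub_pos' hx).le]
  ring_nf

lemma thetaY_sq {x : ℝ} (hx : 2 < x) : thetaY x ^ 2 * (x ^ 2 - 4) = 1 := by
  have h := sub_pos' hx
  rw [thetaY_pow hx 2]
  norm_num
  rw [Real.rpow_neg_one]
  field_simp

lemma thetaY_hasDeriv {x : ℝ} (hx : 2 < x) :
    HasDerivAt thetaY (-x * thetaY x ^ 3) x := by
  have h := sub_pos' hx
  have h1 : HasDerivAt (fun t : ℝ => t ^ 2 - 4) (2 * x) x := by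
    simpa using ((hasDerivAt_pow 2 x).sub_const 4)
  have h2 := h1.rpow_const (p := -(1/2 : ℝ)) (Or.inl h.ne')
  refine h2.congr_deriv (Eq.symm ?_)
  rw [thetaY_pow hx 3, show (-(1/2) - 1 : ℝ) = -((3:ℕ)/2) by norm_num]
  ring



noncomputable def Ap (q : ℝ[X]) : ℝ[X] := -(X ^ 3 * derivative q)
noncomputable def Bp (q : ℝ[X]) : ℝ[X] := q - (X + C 4 * X ^ 3) * derivative q

lemma hasDeriv_F (q : ℝ[X]) {x : ℝ} (hx : 2 < x) :
    HasDerivAt (fun t => q.eval (thetaY t)) (x * (Ap q).eval (thetaY x)) x := by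
  have h := (q.hasDerivAt (thetaY x)).comp x (thetaY_hasDeriv hx)
  refine h.congr_deriv (Eq.symm ?_)
  simp [Ap]
  ring

lemma hasDeriv_G (q : ℝ[X]) {x : ℝ} (hx : 2 < x) :
    HasDerivAt (fun t => t * q.eval (thetaY t)) ((Bp q).eval (thetaY x)) x := by
  have h := (hasDerivAt_id x).mul (hasDeriv_F q hx)
  refine h.congr_deriv (Eq.symm ?_)
  have hs := thetaY_sq hx
  simp [Ap, Bp]
  linear_combination thetaY x * eval (thetaY x) (derivative q) * hs



lemma deriv_F (q : ℝ[X]) {x : ℝ} (hx : 2 < x) :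
    deriv (fun t => q.eval (thetaY t)) x = x * (Ap q).eval (thetaY x) :=
  (hasDeriv_F q hx).deriv

lemma iteratedDeriv_two (q : ℝ[X]) {x : ℝ} (hx : 2 < x) :
    iteratedDeriv 2 (fun t => q.eval (thetaY t)) x = (Bp (Ap q)).eval (thetaY x) := by
  rw [show (2:ℕ) = 1 + 1 from rfl, iteratedDeriv_succ, iteratedDeriv_one]
  have hev : deriv (fun t => q.eval (thetaY t)) =ᶠ[nhds x]
      (fun t => t * (Ap q).eval (thetaY t)) := by
    filter_upwards [Ioi_mem_nhds hx] with t ht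
    exact deriv_F q ht
  rw [hev.deriv_eq]
  exact (hasDeriv_G (Ap q) hx).deriv

lemma iteratedDeriv_three (q : ℝ[X]) {x : ℝ} (hx : 2 < x) :
    iteratedDeriv 3 (fun t => q.eval (thetaY t)) x
      = x * (Ap (Bp (Ap q))).eval (thetaY x) := by
  rw [show (3:ℕ) = 2 + 1 from rfl, iteratedDeriv_succ]
  have hev : iteratedDeriv 2 (fun t => q.eval (thetaY t)) =ᶠ[nhds x]
      (fun t => (Bp (Ap q)).eval (thetaY t)) := by
    filter_upwards [Ioi_mem_nhds hx] with t ht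
    exact iteratedDeriv_two q ht
  rw [hev.deriv_eq]
  exact (hasDeriv_F (Bp (Ap q)) hx).deriv



lemma thetaDop_eval (q : ℝ[X]) {x : ℝ} (hx : 2 < x) :
    thetaDop (fun t => q.eval (thetaY t)) x = (Dp q).eval (thetaY x) := by
  have hx0 : x ≠ 0 := by positivity
  have ht : thetaY x ≠ 0 := (thetaY_pos hx).ne'
  have hs := thetaY_sq hx
  rw [thetaDop, deriv_F q hx]
  simp [Dp, Ap]
  field_simp
  linear_combination (-thetaY x * eval (thetaY x) (derivative q)) * hs

lemma thetaEop_eval (q : ℝ[X]) {x : ℝ} (hx : 2 < x) :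
    thetaEop (fun t => q.eval (thetaY t)) x = (Ep q).eval (thetaY x) := by
  have hx0 : x ≠ 0 := by positivity
  have ht : thetaY x ≠ 0 := (thetaY_pos hx).ne'
  have hs := thetaY_sq hx
  rw [thetaEop, deriv_F q hx, iteratedDeriv_two q hx, iteratedDeriv_three q hx]
  simp [Ep, Ap, Bp]
  field_simp
  set b' := eval (thetaY x) (derivative q)
  set c' := eval (thetaY x) (derivative (derivative q))
  set d' := eval (thetaY x) (derivative (derivative (derivative q)))
  linear_combination (-4*x^2*thetaY x^7*d' - 36*x^2*thetaY x^6*c' - x^2*thetaY x^5*d' - 60*x^2*thetaY x^5*b' - 6*x^2*thetaY x^4*c' - 6*x^2*thetaY x^3*b' + 16*thetaY x^7*d' + 144*thetaY x^6*c' + 240*thetaY x^5*b' + 20*thetaY x^4*c' - thetaY x^3*d' + 60*thetaY x^3*b' + 2*thetaY x^2*c' - 4*thetaY x*b') * hs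


lemma coeff_Dp (q : ℝ[X]) (n : ℕ) : (Dp q).coeff n = (4 - 4 * n) * q.coeff n := by
  cases n with
  | zero => simp [Dp]
  | succ m =>
      simp [Dp, coeff_X_mul, coeff_derivative]
      ring

noncomputable def Dinv (q : ℝ[X]) : ℝ[X] :=
  ∑ k ∈ q.support, C (q.coeff k / (4 - 4 * (k : ℝ))) * X ^ k

lemma coeff_Dinv (q : ℝ[X]) (n : ℕ) :
    (Dinv q).coeff n = q.coeff n / (4 - 4 * (n : ℝ)) := by
  rw [Dinv, finset_sum_coeff]
  simp only [coeff_C_mul, coeff_X_pow]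
  rw [Finset.sum_eq_single n]
  · by_cases h : n ∈ q.support
    · simp
    · simp [Polynomial.notMem_support_iff.mp h]
  · intro k _ hk; simp [Ne.symm hk]
  · intro h; simp [Polynomial.notMem_support_iff.mp h]

lemma Dp_Dinv (q : ℝ[X]) (h1 : q.coeff 1 = 0) : Dp (Dinv q) = q := by
  ext n
  rw [coeff_Dp, coeff_Dinv]
  rcases eq_or_ne n 1 with rfl | hn
  · simp [h1]
  · have : (4 - 4 * (n : ℝ)) ≠ 0 := by
      have : (n : ℝ) ≠ 1 := by exact_mod_cast hn
      intro h; apply this; linarith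
    field_simp
    exact mul_div_cancel_left₀ _ (by intro h; apply this; linarith)

lemma coeff_Ep_ne (q : ℝ[X]) (n : ℕ) (h : (Ep q).coeff n ≠ 0) :
    q.coeff n ≠ 0 ∨ (2 ≤ n ∧ q.coeff (n - 2) ≠ 0) := by
  by_contra hc
  push_neg at hc
  obtain ⟨h0, h2⟩ := hc
  apply h
  have A1 : (C 4 * q).coeff n = (0:ℝ) := by rw [coeff_C_mul, h0, mul_zero]
  have A2 : (C 4 * (derivative q * X ^ 3)).coeff n = (0:ℝ) := by
    rw [coeff_C_mul, coeff_mul_X_pow']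
    split_ifs with hh
    · rw [coeff_derivative, show n - 3 + 1 = n - 2 by omega, h2 (by omega), zero_mul, mul_zero]
    · rw [mul_zero]
  have A3 : (C 4 * (derivative q * X ^ 1)).coeff n = (0:ℝ) := by
    rw [coeff_C_mul, coeff_mul_X_pow']
    split_ifs with hh
    · rw [coeff_derivative, show n - 1 + 1 = n by omega, h0, zero_mul, mul_zero]
    · rw [mul_zero]
  have A4 : (C 2 * (derivative (derivative q) * X ^ 2)).coeff n = (0:ℝ) := by
    rw [coeff_C_mul, coeff_mul_X_pow']
    split_ifs with hh
    · rw [coeff_derivative, coeff_derivative, show n - 2 + 1 + 1 = n by omega, h0]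
      ring
    · rw [mul_zero]
  have A5 : (C 4 * (derivative (derivative q) * X ^ 4)).coeff n = (0:ℝ) := by
    rw [coeff_C_mul, coeff_mul_X_pow']
    split_ifs with hh
    · rw [coeff_derivative, coeff_derivative, show n - 4 + 1 + 1 = n - 2 by omega,
        h2 (by omega)]
      ring
    · rw [mul_zero]
  have A6 : (derivative (derivative (derivative q)) * X ^ 3).coeff n = (0:ℝ) := by
    rw [coeff_mul_X_pow']
    split_ifs with hh
    · rw [coeff_derivative, coeff_derivative, coeff_derivative,
        show n - 3 + 1 + 1 + 1 = n by omega, h0]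
      ring
    · rfl
  have A7 : (C 4 * (derivative (derivative (derivative q)) * X ^ 5)).coeff n = (0:ℝ) := by
    rw [coeff_C_mul, coeff_mul_X_pow']
    split_ifs with hh
    · rw [coeff_derivative, coeff_derivative, coeff_derivative,
        show n - 5 + 1 + 1 + 1 = n - 2 by omega, h2 (by omega)]
      ring
    · rw [mul_zero]
  simp only [Ep, coeff_add, coeff_sub, A1, A2, A3, A4, A5, A6, A7]
  ring

def Psupp (g : ℕ) (q : ℝ[X]) : Prop :=
  ∀ n, q.coeff n ≠ 0 → ∃ j, 1 ≤ j ∧ j ≤ g ∧ n = 2 * j + 1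

lemma coeff_span_sum (c : ℕ → ℝ) (g n : ℕ) :
    (∑ j ∈ Finset.Icc 1 g, C (c j) * X ^ (2 * j + 1)).coeff n
      = if h : ∃ j, 1 ≤ j ∧ j ≤ g ∧ n = 2 * j + 1 then c h.choose else 0 := by
  rw [finset_sum_coeff]
  simp only [coeff_C_mul, coeff_X_pow]
  split_ifs with h
  · obtain ⟨hj1, hjg, hjn⟩ := h.choose_spec
    rw [Finset.sum_eq_single h.choose]
    · rw [if_pos hjn, mul_one]
    · intro k hk hkne
      have : ¬ (n = 2 * k + 1) := by
        intro he; apply hkne; omega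
      simp [this]
    · intro hmem
      exact absurd (Finset.mem_Icc.mpr ⟨hj1, hjg⟩) hmem
  · push_neg at h
    apply Finset.sum_eq_zero
    intro k hk
    rw [Finset.mem_Icc] at hk
    have : ¬ (n = 2 * k + 1) := fun he => by
      have := h k hk.1 hk.2; omega
    simp [this]

lemma Psupp_of_span (g : ℕ) (c : ℕ → ℝ) :
    Psupp g (∑ j ∈ Finset.Icc 1 g, C (c j) * X ^ (2 * j + 1)) := by
  intro n hn
  rw [coeff_span_sum] at hn
  split_ifs at hn with h
  · exact ⟨h.choose, h.choose_spec⟩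
  · exact absurd rfl hn

lemma span_of_Psupp {g : ℕ} {q : ℝ[X]} (h : Psupp g q) :
    q = ∑ j ∈ Finset.Icc 1 g, C (q.coeff (2 * j + 1)) * X ^ (2 * j + 1) := by
  ext n
  rw [coeff_span_sum]
  split_ifs with hh
  · obtain ⟨hj1, hjg, hjn⟩ := hh.choose_spec
    exact congrArg q.coeff hjn
  · by_contra hne
    obtain ⟨j, hj⟩ := h n (by intro h0; rw [h0] at hne; exact hne rfl)
    exact hh ⟨j, hj⟩

lemma Psupp_coeff_one {g : ℕ} {q : ℝ[X]} (h : Psupp g q) : q.coeff 1 = 0 := by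
  by_contra hne
  obtain ⟨j, hj1, _, hj⟩ := h 1 hne
  omega

lemma Psupp_Ep {g : ℕ} {q : ℝ[X]} (h : Psupp g q) : Psupp (g + 1) (Ep q) := by
  intro n hn
  rcases coeff_Ep_ne q n hn with h1 | ⟨h2, h3⟩
  · obtain ⟨j, hj1, hjg, hjn⟩ := h n h1
    exact ⟨j, hj1, by omega, hjn⟩
  · obtain ⟨j, hj1, hjg, hjn⟩ := h (n - 2) h3
    exact ⟨j + 1, by omega, by omega, by omega⟩

lemma Psupp_Dinv {g : ℕ} {q : ℝ[X]} (h : Psupp g q) : Psupp g (Dinv q) := by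
  intro n hn
  rw [coeff_Dinv] at hn
  exact h n (by intro h0; rw [h0] at hn; simp at hn)

noncomputable def sol : ℕ → ℝ[X]
  | 0 => -X
  | (g + 1) => Dinv (Ep (sol (g)))

lemma Ep_negX : Ep (-X : ℝ[X]) = C (-4) * X ^ 3 := by
  simp [Ep]

lemma Psupp_sol (g : ℕ) : Psupp (g + 1) (sol (g + 1)) := by
  induction g with
  | zero =>
      intro n hn
      rw [sol, show sol 0 = -X from rfl, Ep_negX, coeff_Dinv] at hn
      refine ⟨1, le_refl _, le_refl _, ?_⟩
      by_contra hne
      have : n ≠ 3 := by omega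
      simp [coeff_C_mul, coeff_X_pow, this] at hn
  | succ m ih =>
      have := Psupp_Dinv (Psupp_Ep ih)
      rw [sol]
      exact this

lemma Dp_sol (g : ℕ) : Dp (sol (g + 1)) = Ep (sol g) := by
  apply Dp_Dinv
  cases g with
  | zero =>
      rw [show sol 0 = -X from rfl, Ep_negX]
      simp [coeff_C_mul, coeff_X_pow]
  | succ m => exact Psupp_coeff_one (Psupp_Ep (Psupp_sol m))


lemma Dp_eq_zero {g : ℕ} {q : ℝ[X]} (hP : Psupp g q) (h : Dp q = 0) : q = 0 := by
  ext n
  by_contra hne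
  have hne' : q.coeff n ≠ 0 := by simpa using hne
  obtain ⟨j, hj1, hjg, hjn⟩ := hP n hne'
  have h0 : (Dp q).coeff n = 0 := by rw [h, coeff_zero]
  rw [coeff_Dp] at h0
  have hn3 : 3 ≤ n := by omega
  have : (4 - 4 * (n : ℝ)) ≠ 0 := by
    have : (3:ℝ) ≤ (n:ℝ) := by exact_mod_cast hn3
    intro hz; nlinarith
  exact hne' (by
    rcases mul_eq_zero.mp h0 with h' | h'
    · exact absurd h' this
    · exact h')

lemma Psupp_sub {g : ℕ} {a b : ℝ[X]} (ha : Psupp g a) (hb : Psupp g b) :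
    Psupp g (a - b) := by
  intro n hn
  rw [coeff_sub] at hn
  by_cases h : a.coeff n ≠ 0
  · exact ha n h
  · push_neg at h
    exact hb n (by intro h0; rw [h, h0] at hn; simp at hn)

lemma Dp_sub (a b : ℝ[X]) : Dp (a - b) = Dp a - Dp b := by
  ext n
  simp only [coeff_Dp, coeff_sub]
  ring

lemma thetaY_surj {t : ℝ} (ht : 0 < t) : ∃ x, 2 < x ∧ thetaY x = t := by
  have h4 : (0:ℝ) < 4 + (t ^ 2)⁻¹ := by positivity
  refine ⟨Real.sqrt (4 + (t ^ 2)⁻¹), ?_, ?_⟩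
  · have hx2 : Real.sqrt (4 + (t ^ 2)⁻¹) ^ 2 = 4 + (t ^ 2)⁻¹ := Real.sq_sqrt h4.le
    nlinarith [Real.sqrt_nonneg (4 + (t ^ 2)⁻¹), (by positivity : (0:ℝ) < (t ^ 2)⁻¹)]
  · rw [thetaY, Real.sq_sqrt h4.le]
    have e1 : 4 + (t ^ 2)⁻¹ - 4 = (t ^ 2)⁻¹ := by ring
    have e2 : (t ^ 2)⁻¹ = t ^ (-2 : ℝ) := by
      rw [Real.rpow_neg ht.le]
      congr 1
      rw [show ((2:ℝ)) = ((2:ℕ):ℝ) by norm_num, Real.rpow_natCast]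
    rw [e1, e2, ← Real.rpow_mul ht.le]
    norm_num

lemma funDE_to_poly {q r : ℝ[X]}
    (h : ∀ x : ℝ, 2 < x → thetaDop (fun t => q.eval (thetaY t)) x
      = thetaEop (fun t => r.eval (thetaY t)) x) : Dp q = Ep r := by
  apply Polynomial.eq_of_infinite_eval_eq
  apply Set.Infinite.mono _ (Set.Ioi_infinite (0:ℝ))
  intro t ht
  obtain ⟨x, hx, rfl⟩ := thetaY_surj (Set.mem_Ioi.mp ht)
  have := h x hx
  rw [thetaDop_eval q hx, thetaEop_eval r hx] at this
  exact this

lemma sol_one : sol 1 = C (1/2 : ℝ) * X ^ 3 := by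
  ext n
  rw [show sol 1 = Dinv (Ep (sol 0)) from rfl, show sol 0 = -X from rfl, Ep_negX,
    coeff_Dinv]
  rcases eq_or_ne n 3 with rfl | hn
  · norm_num
  · simp [coeff_C_mul, coeff_X_pow, hn]

lemma sol_spec : thetaOnePointSeq sol := by
  refine ⟨rfl, ?_⟩
  intro g hg
  obtain ⟨m, rfl⟩ : ∃ m, g = m + 1 := ⟨g - 1, by omega⟩
  constructor
  · exact ⟨fun j => (sol (m + 1)).coeff (2 * j + 1), span_of_Psupp (Psupp_sol m)⟩
  · intro x hx
    rw [thetaDop_eval _ hx, show m + 1 - 1 = m from rfl, thetaEop_eval _ hx, Dp_sol m]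

lemma seq_eq {p : ℕ → ℝ[X]} (hp : thetaOnePointSeq p) : ∀ g, p g = sol g := by
  intro g
  induction g with
  | zero => exact hp.1
  | succ m ih =>
      obtain ⟨⟨c, hc⟩, hfun⟩ := hp.2 (m + 1) (by omega)
      have hpoly : Dp (p (m + 1)) = Ep (p m) :=
        funDE_to_poly (fun x hx => by simpa using hfun x hx)
      rw [ih] at hpoly
      have hzero : Dp (p (m + 1) - sol (m + 1)) = 0 := by
        rw [Dp_sub, hpoly, Dp_sol m, sub_self]
      have hPp : Psupp (m + 1) (p (m + 1)) := hc ▸ Psupp_of_span (m + 1) c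
      have hd := Dp_eq_zero (Psupp_sub hPp (Psupp_sol m)) hzero
      have := sub_eq_zero.mp hd
      exact this


/-- there is a unique sequence of polynomials `(p_g)` with
`p₀(Y) = −Y`, each `p_g` (for `g ≥ 1`) an ℝ-linear combination of
`Y³, Y⁵, …, Y^{2g+1}`, satisfying `D(p_g ∘ y) = E(p_{g−1} ∘ y)` on `(2, ∞)`;
moreover `p₁(Y) = (1/2)·Y³`. -/
theorem theta_one_point_recursion_polynomiality :
    (∃! p : ℕ → Polynomial ℝ, thetaOnePointSeq p) ∧
    ∀ p : ℕ → Polynomial ℝ, thetaOnePointSeq p →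
      p 1 = Polynomial.C (1 / 2 : ℝ) * Polynomial.X ^ 3 := by
  constructor
  · exact ⟨sol, sol_spec, fun p hp => funext (seq_eq hp)⟩
  · intro p hp
    rw [seq_eq hp 1, sol_one]
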